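/- For every n ≥ 1 and formal variable t, the power series identity Σ_{i≥0} (i+1)^n t^i = A_n(t)/(t·(1−t)^{n+1}) holds, where A_n(t) = Σ_{σ ∈ S_n} t^{1+d(σ)} is the n-th Eulerian polynomial; equivalently (1−t)^{n+1} · Σ_{i≥0} (i+1)^n t^i = A_{n,1} + A_{n,2} t + ⋯ + A_{n,n} t^{n−1}. -/

import Mathlib

/-- The number of descents of a permutation of `{1,…,n}` (indices `i` with
`σ(i) > σ(i+1)`). -/
noncomputable def descents {n : ℕ} (σ : Equiv.Perm (Fin n)) : ℕ :=
  Nat.card {i : Fin n // ∃ h : (i : ℕ) + 1 < n, σ ⟨(i : ℕ) + 1, h⟩ < σ i}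

/-- The Eulerian number `A_{n,k}`: the number of permutations of `{1,…,n}` with exactly
`k − 1` descents (`0` for `k = 0`, and automatically `0` for `k > n`). -/
noncomputable def eulerian (n k : ℕ) : ℕ :=
  if k = 0 then 0 else Nat.card {σ : Equiv.Perm (Fin n) // descents σ + 1 = k}

open Finset Equiv

open scoped Classical in
noncomputable def dset {n : ℕ} (σ : Equiv.Perm (Fin n)) : Finset ℕ :=
  (Finset.range n).filter fun i => ∃ h : i + 1 < n, σ ⟨i + 1, h⟩ < σ ⟨i, Nat.lt_of_succ_lt h⟩

open scoped Classical

lemma descents_eq {n : ℕ} (σ : Equiv.Perm (Fin n)) : descents σ = (dset σ).card := by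
  rw [descents, Nat.card_eq_fintype_card, Fintype.card_subtype]
  refine Finset.card_bij (fun i _ => (i : ℕ)) ?_ ?_ ?_
  · intro i hi
    simp only [mem_filter, mem_univ, true_and] at hi ⊢
    simp only [dset, mem_filter, mem_range]
    exact ⟨i.isLt, hi⟩
  · intro a _ b _ h
    exact Fin.ext h
  · intro j hj
    simp only [dset, mem_filter, mem_range] at hj
    exact ⟨⟨j, hj.1⟩, by simpa using hj.2, rfl⟩

lemma mem_dset_lt {n : ℕ} (σ : Equiv.Perm (Fin n)) {j : ℕ} (hj : j ∈ dset σ) : j + 1 < n := by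
  simp only [dset, mem_filter] at hj
  exact hj.2.choose

lemma descents_le {n : ℕ} (σ : Equiv.Perm (Fin n)) : descents σ ≤ n - 1 := by
  rw [descents_eq]
  calc (dset σ).card ≤ (range (n-1)).card := by
        apply Finset.card_le_card
        intro j hj
        have := mem_dset_lt σ hj
        simp only [mem_range]; omega
    _ = n - 1 := card_range _

section Insert

variable {m : ℕ}

/-- insert the value `m` (the max) at position `p` in the word of `τ`. -/
noncomputable def insFun (τ : Equiv.Perm (Fin m)) (p : Fin (m + 1)) :
    Fin (m + 1) → Fin (m + 1) := fun i =>
  if h : (i : ℕ) < (p : ℕ) then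
    (τ ⟨(i : ℕ), by have := p.isLt; omega⟩).castSucc
  else if h2 : (i : ℕ) = (p : ℕ) then Fin.last m
  else (τ ⟨(i : ℕ) - 1, by have := i.isLt; have := p.isLt; omega⟩).castSucc

lemma insFun_inj (τ : Equiv.Perm (Fin m)) (p : Fin (m + 1)) :
    Function.Injective (insFun τ p) := by
  have hlast : ∀ a : Fin m, (a.castSucc : Fin (m+1)) ≠ Fin.last m := by
    intro a
    exact ne_of_lt (Fin.castSucc_lt_last a)
  have hcs : ∀ a b : Fin m, (τ a).castSucc = (τ b).castSucc → (a : ℕ) = (b : ℕ) := by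
    intro a b h
    have := τ.injective (Fin.castSucc_injective m h)
    exact congrArg Fin.val this
  intro i j hij
  have hi := i.isLt
  have hj := j.isLt
  unfold insFun at hij
  split_ifs at hij with h1 h2 h3 h4 h5 h6 h7
  · exact Fin.ext (by simpa using hcs _ _ hij)
  · exact absurd hij (hlast _)
  · have := hcs _ _ hij; simp only [] at this; exact Fin.ext (by omega)
  · exact absurd hij.symm (hlast _)
  · exact Fin.ext (by omega)
  · exact absurd hij.symm (hlast _)
  · have := hcs _ _ hij; simp only [] at this; exact Fin.ext (by omega)
  · exact absurd hij (hlast _)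
  · have := hcs _ _ hij; simp only [] at this; exact Fin.ext (by omega)

noncomputable def insP (τ : Equiv.Perm (Fin m)) (p : Fin (m + 1)) : Equiv.Perm (Fin (m + 1)) :=
  Equiv.ofBijective _ (Finite.injective_iff_bijective.mp (insFun_inj τ p))

lemma insP_apply (τ : Equiv.Perm (Fin m)) (p : Fin (m + 1)) (i : Fin (m + 1)) :
    insP τ p i = insFun τ p i := rfl

lemma insP_lt (τ : Equiv.Perm (Fin m)) (p : Fin (m + 1)) {i : Fin (m + 1)}
    (h : (i : ℕ) < (p : ℕ)) (h' : (i : ℕ) < m) :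
    insP τ p i = (τ ⟨(i : ℕ), h'⟩).castSucc := by
  rw [insP_apply, insFun]
  rw [dif_pos h]

lemma insP_self (τ : Equiv.Perm (Fin m)) (p : Fin (m + 1)) :
    insP τ p p = Fin.last m := by
  rw [insP_apply, insFun]
  rw [dif_neg (lt_irrefl _), dif_pos rfl]

lemma insP_gt (τ : Equiv.Perm (Fin m)) (p : Fin (m + 1)) {i : Fin (m + 1)}
    (h : (p : ℕ) < (i : ℕ)) (h' : (i : ℕ) - 1 < m) :
    insP τ p i = (τ ⟨(i : ℕ) - 1, h'⟩).castSucc := by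
  rw [insP_apply, insFun]
  rw [dif_neg (by omega), dif_neg (by omega)]

end Insert

section Descents

variable {m : ℕ} (τ : Equiv.Perm (Fin m)) (p : Fin (m + 1))

lemma mem_dset_iff {n : ℕ} (σ : Equiv.Perm (Fin n)) (j : ℕ) :
    j ∈ dset σ ↔ ∃ h : j + 1 < n, σ ⟨j + 1, h⟩ < σ ⟨j, Nat.lt_of_succ_lt h⟩ := by
  constructor
  · intro hj
    simp only [dset, mem_filter] at hj
    exact hj.2
  · intro h
    simp only [dset, mem_filter, mem_range]
    exact ⟨Nat.lt_of_succ_lt h.choose, h⟩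

lemma insP_lt' (i : ℕ) (hm : i < m + 1) (h : i < (p : ℕ)) (h' : i < m) :
    insP τ p ⟨i, hm⟩ = (τ ⟨i, h'⟩).castSucc := insP_lt τ p h h'

lemma insP_self' (i : ℕ) (hm : i < m + 1) (h : i = (p : ℕ)) :
    insP τ p ⟨i, hm⟩ = Fin.last m := by
  have : (⟨i, hm⟩ : Fin (m + 1)) = p := Fin.ext h
  rw [this, insP_self]

lemma insP_gt' (i : ℕ) (hm : i < m + 1) (h : (p : ℕ) < i) (h' : i - 1 < m) :
    insP τ p ⟨i, hm⟩ = (τ ⟨i - 1, h'⟩).castSucc := insP_gt τ p h h'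

lemma mem_dset_insP (i : ℕ) :
    i ∈ dset (insP τ p) ↔
      ((i ∈ dset τ ∧ i + 1 < (p : ℕ)) ∨ ((p : ℕ) < i ∧ i - 1 ∈ dset τ)
        ∨ (i = (p : ℕ) ∧ (p : ℕ) < m)) := by
  have hp := p.isLt
  rw [mem_dset_iff]
  rcases Nat.lt_trichotomy (i + 1) (p : ℕ) with hc | hc | hc
  · -- i + 1 < p : descent iff descent of τ at i
    have h1 : i + 1 < m + 1 := by omega
    have h2 : i + 1 < m := by omega
    have e1 := insP_lt' τ p (i + 1) h1 hc h2
    have e2 := insP_lt' τ p i (by omega) (by omega) (by omega)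
    constructor
    · rintro ⟨h, hlt⟩
      rw [e1, e2, Fin.castSucc_lt_castSucc_iff] at hlt
      exact Or.inl ⟨(mem_dset_iff τ i).2 ⟨h2, hlt⟩, hc⟩
    · rintro (⟨hi, -⟩ | ⟨hgt, -⟩ | ⟨heq, -⟩)
      · rcases (mem_dset_iff τ i).1 hi with ⟨h, hlt⟩
        exact ⟨h1, by rw [e1, e2, Fin.castSucc_lt_castSucc_iff]; exact hlt⟩
      · omega
      · omega
  · -- i + 1 = p : never a descent of insP
    have h1 : i + 1 < m + 1 := by omega
    have e1 := insP_self' τ p (i + 1) h1 hc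
    constructor
    · rintro ⟨h, hlt⟩
      rw [e1, insP_lt' τ p i (by omega) (by omega) (by omega)] at hlt
      exact absurd hlt (not_lt.2 (Fin.le_last _))
    · rintro (⟨-, h⟩ | ⟨hgt, -⟩ | ⟨heq, -⟩) <;> omega
  · -- p ≤ i
    rcases Nat.lt_or_ge (p : ℕ) i with hgt | hge
    · -- p < i
      constructor
      · rintro ⟨h, hlt⟩
        have h2 : i < m := by omega
        have e1 := insP_gt' τ p (i + 1) h (by omega) (by omega)
        have e2 := insP_gt' τ p i (by omega) hgt (by omega)
        rw [e1, e2, Fin.castSucc_lt_castSucc_iff] at hlt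
        refine Or.inr (Or.inl ⟨hgt, (mem_dset_iff τ (i - 1)).2 ⟨by omega, ?_⟩⟩)
        convert hlt using 3 <;> omega
      · rintro (⟨-, h⟩ | ⟨-, hi⟩ | ⟨heq, -⟩)
        · omega
        · rcases (mem_dset_iff τ (i - 1)).1 hi with ⟨h, hlt⟩
          have h1 : i + 1 < m + 1 := by omega
          refine ⟨h1, ?_⟩
          have e1 := insP_gt' τ p (i + 1) h1 (by omega) (by omega)
          have e2 := insP_gt' τ p i (by omega) hgt (by omega)
          rw [e1, e2, Fin.castSucc_lt_castSucc_iff]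
          convert hlt using 3 <;> omega
        · omega
    · -- i = p
      have heq : i = (p : ℕ) := by omega
      constructor
      · rintro ⟨h, -⟩
        exact Or.inr (Or.inr ⟨heq, by omega⟩)
      · rintro (⟨-, h⟩ | ⟨hgt, -⟩ | ⟨-, hlt⟩)
        · omega
        · omega
        · have h1 : i + 1 < m + 1 := by omega
          refine ⟨h1, ?_⟩
          have e1 := insP_gt' τ p (i + 1) h1 (by omega) (by omega)
          have e2 := insP_self' τ p i (by omega) heq
          rw [e1, e2]
          exact Fin.castSucc_lt_last _

end Descents

section Count

variable {m : ℕ} (τ : Equiv.Perm (Fin m)) (p : Fin (m + 1))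

lemma dset_insP_card :
    (dset (insP τ p)).card
      = ((dset τ).filter fun j => j + 1 < (p : ℕ)).card
        + ((dset τ).filter fun j => (p : ℕ) < j + 1).card
        + (if (p : ℕ) < m then 1 else 0) := by
  classical
  have hset : dset (insP τ p)
      = (((dset τ).filter fun j => j + 1 < (p : ℕ))
        ∪ ((dset τ).filter fun j => (p : ℕ) < j + 1).image (· + 1))
        ∪ (if (p : ℕ) < m then {(p : ℕ)} else ∅) := by
    ext i
    rw [mem_dset_insP]
    simp only [mem_union, mem_filter, mem_image]
    constructor
    · rintro (⟨hi, hlt⟩ | ⟨hgt, hi⟩ | ⟨heq, hlt⟩)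
      · exact Or.inl (Or.inl ⟨hi, hlt⟩)
      · refine Or.inl (Or.inr ⟨i - 1, ⟨hi, by omega⟩, by omega⟩)
      · rw [if_pos hlt]
        exact Or.inr (by simp [heq])
    · rintro ((⟨hi, hlt⟩ | ⟨j, ⟨hj, hgt⟩, rfl⟩) | hmem)
      · exact Or.inl ⟨hi, hlt⟩
      · exact Or.inr (Or.inl ⟨by omega, by simpa using hj⟩)
      · split_ifs at hmem with hpm
        · simp only [mem_singleton] at hmem
          exact Or.inr (Or.inr ⟨hmem, hpm⟩)
        · simp at hmem
  rw [hset]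
  have d1 : Disjoint ((dset τ).filter fun j => j + 1 < (p : ℕ))
      (((dset τ).filter fun j => (p : ℕ) < j + 1).image (· + 1)) := by
    rw [Finset.disjoint_left]
    rintro a ha hb
    simp only [mem_filter] at ha
    simp only [mem_image, mem_filter] at hb
    obtain ⟨j, ⟨-, hj⟩, rfl⟩ := hb
    omega
  have d2 : Disjoint (((dset τ).filter fun j => j + 1 < (p : ℕ))
        ∪ ((dset τ).filter fun j => (p : ℕ) < j + 1).image (· + 1))
      (if (p : ℕ) < m then ({(p : ℕ)} : Finset ℕ) else ∅) := by
    split_ifs with hpm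
    · rw [Finset.disjoint_right]
      intro a ha hb
      simp only [mem_singleton] at ha
      subst ha
      simp only [mem_union, mem_filter, mem_image] at hb
      rcases hb with ⟨-, h⟩ | ⟨j, ⟨-, hj⟩, hje⟩ <;> omega
    · exact Finset.disjoint_empty_right _
  rw [Finset.card_union_of_disjoint d2, Finset.card_union_of_disjoint d1,
    Finset.card_image_of_injective _ (fun a b h => by omega)]
  congr 1
  split_ifs <;> simp

lemma dset_partition :
    (dset τ).card = ((dset τ).filter fun j => j + 1 < (p : ℕ)).card
      + ((dset τ).filter fun j => j + 1 = (p : ℕ)).card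
      + ((dset τ).filter fun j => (p : ℕ) < j + 1).card := by
  classical
  have e := Finset.card_filter_add_card_filter_not
    (s := dset τ) (p := fun j => j + 1 < (p : ℕ))
  have hunion : (dset τ).filter (fun j => ¬(j + 1 < (p : ℕ)))
      = ((dset τ).filter fun j => j + 1 = (p : ℕ)) ∪ ((dset τ).filter fun j => (p : ℕ) < j + 1) := by
    ext j
    simp only [mem_filter, mem_union]
    constructor
    · rintro ⟨hj, h⟩
      rcases Nat.lt_trichotomy (j + 1) (p : ℕ) with h' | h' | h' <;>
        [omega; exact Or.inl ⟨hj, h'⟩; exact Or.inr ⟨hj, h'⟩]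
    · rintro (⟨hj, h⟩ | ⟨hj, h⟩) <;> exact ⟨hj, by omega⟩
  have hdisj : Disjoint ((dset τ).filter fun j => j + 1 = (p : ℕ))
      ((dset τ).filter fun j => (p : ℕ) < j + 1) := by
    rw [Finset.disjoint_left]
    intro a ha hb
    simp only [mem_filter] at ha hb
    omega
  rw [hunion, Finset.card_union_of_disjoint hdisj] at e
  omega

lemma card_filter_mid :
    ((dset τ).filter fun j => j + 1 = (p : ℕ)).card
      = if 0 < (p : ℕ) ∧ (p : ℕ) - 1 ∈ dset τ then 1 else 0 := by
  classical
  split_ifs with h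
  · have : (dset τ).filter (fun j => j + 1 = (p : ℕ)) = {(p : ℕ) - 1} := by
      ext j
      simp only [mem_filter, mem_singleton]
      constructor
      · rintro ⟨-, hj⟩; omega
      · rintro rfl; exact ⟨h.2, by omega⟩
    rw [this, Finset.card_singleton]
  · rw [Finset.card_eq_zero]
    ext j
    simp only [mem_filter, Finset.notMem_empty, iff_false, not_and]
    intro hj h'
    exact h ⟨by omega, by rw [show (p:ℕ) - 1 = j by omega]; exact hj⟩

lemma descents_insP :
    descents (insP τ p)
      = if ((p : ℕ) = m ∨ (0 < (p : ℕ) ∧ (p : ℕ) - 1 ∈ dset τ)) then descents τ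
        else descents τ + 1 := by
  classical
  have h1 := dset_insP_card τ p
  have h2 := dset_partition τ p
  have h3 := card_filter_mid τ p
  have hple := p.isLt
  rw [descents_eq, descents_eq, h1]
  by_cases hm : (p : ℕ) = m
  · have hmid0 : ((dset τ).filter fun j => j + 1 = (p : ℕ)).card = 0 := by
      rw [Finset.card_eq_zero]
      ext j
      simp only [mem_filter, Finset.notMem_empty, iff_false, not_and]
      intro hj
      have := mem_dset_lt τ hj
      omega
    rw [if_pos (Or.inl hm), if_neg (show ¬((p : ℕ) < m) by omega)]
    omega
  · have hpm : (p : ℕ) < m := by omega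
    rw [if_pos hpm]
    by_cases hgood : 0 < (p : ℕ) ∧ (p : ℕ) - 1 ∈ dset τ
    · rw [if_pos (Or.inr hgood)]
      rw [if_pos hgood] at h3
      omega
    · rw [if_neg (not_or.mpr ⟨hm, hgood⟩)]
      rw [if_neg hgood] at h3
      omega

end Count

section Rec

variable {m : ℕ} (τ : Equiv.Perm (Fin m))

open scoped Classical

lemma card_good :
    (Finset.univ.filter fun p : Fin (m + 1) =>
      ((p : ℕ) = m ∨ (0 < (p : ℕ) ∧ (p : ℕ) - 1 ∈ dset τ))).card = descents τ + 1 := by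
  have hcard : (Finset.univ.filter fun p : Fin (m + 1) =>
      ((p : ℕ) = m ∨ (0 < (p : ℕ) ∧ (p : ℕ) - 1 ∈ dset τ))).card
      = (insert m ((dset τ).image (· + 1))).card := by
    refine Finset.card_bij (fun p _ => (p : ℕ)) ?_ ?_ ?_
    · intro p hp
      simp only [mem_filter, mem_univ, true_and] at hp
      rw [Finset.mem_insert]
      rcases hp with h | ⟨h0, hmem⟩
      · exact Or.inl h
      · refine Or.inr ?_
        simp only [mem_image]
        exact ⟨(p : ℕ) - 1, hmem, by omega⟩
    · intro a _ b _ h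
      exact Fin.ext h
    · intro q hq
      rw [Finset.mem_insert] at hq
      rcases hq with h | hq
      · refine ⟨⟨m, by omega⟩, ?_, by simp [h]⟩
        simp
      · simp only [mem_image] at hq
        obtain ⟨j, hj, rfl⟩ := hq
        have hjm := mem_dset_lt τ hj
        refine ⟨⟨j + 1, by omega⟩, ?_, rfl⟩
        simp only [mem_filter, mem_univ, true_and]
        exact Or.inr ⟨by simp, by simpa using hj⟩
  rw [hcard, Finset.card_insert_of_notMem, Finset.card_image_of_injective _ (fun a b h => by omega),
    ← descents_eq]
  intro h
  simp only [mem_image] at h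
  obtain ⟨j, hj, hje⟩ := h
  have := mem_dset_lt τ hj
  omega

lemma count_insP (j : ℕ) :
    (Finset.univ.filter fun p : Fin (m + 1) => descents (insP τ p) = j).card
      = if descents τ = j then j + 1
        else if descents τ + 1 = j then m + 1 - j else 0 := by
  by_cases hd : descents τ = j
  · rw [if_pos hd]
    have heq : (Finset.univ.filter fun p : Fin (m + 1) => descents (insP τ p) = j)
        = (Finset.univ.filter fun p : Fin (m + 1) =>
            ((p : ℕ) = m ∨ (0 < (p : ℕ) ∧ (p : ℕ) - 1 ∈ dset τ))) := by
      ext p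
      simp only [mem_filter, mem_univ, true_and]
      rw [descents_insP]
      split_ifs with h
      · exact iff_of_true hd h
      · exact iff_of_false (by omega) h
    rw [heq, card_good, hd]
  · rw [if_neg hd]
    by_cases hd2 : descents τ + 1 = j
    · rw [if_pos hd2]
      have hcompl : (Finset.univ.filter fun p : Fin (m + 1) => descents (insP τ p) = j)
          = (Finset.univ.filter fun p : Fin (m + 1) =>
              ¬((p : ℕ) = m ∨ (0 < (p : ℕ) ∧ (p : ℕ) - 1 ∈ dset τ))) := by
        ext p
        simp only [mem_filter, mem_univ, true_and]
        rw [descents_insP]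
        split_ifs with h
        · exact iff_of_false hd (not_not.mpr h)
        · exact iff_of_true hd2 h
      have htot := Finset.card_filter_add_card_filter_not
        (s := (Finset.univ : Finset (Fin (m + 1))))
        (p := fun p : Fin (m + 1) => ((p : ℕ) = m ∨ (0 < (p : ℕ) ∧ (p : ℕ) - 1 ∈ dset τ)))
      rw [card_good, Finset.card_univ, Fintype.card_fin] at htot
      rw [hcompl]
      omega
    · rw [if_neg hd2, Finset.card_eq_zero]
      ext p
      simp only [mem_filter, mem_univ, true_and, Finset.notMem_empty, iff_false]
      rw [descents_insP]
      split_ifs with h <;> omega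

lemma insP_uncurried_inj :
    Function.Injective (fun x : Equiv.Perm (Fin m) × Fin (m + 1) => insP x.1 x.2) := by
  rintro ⟨τ₁, p₁⟩ ⟨τ₂, p₂⟩ h
  simp only [] at h
  have hp : p₁ = p₂ := by
    by_contra hne
    have h1 : insP τ₁ p₁ p₁ = Fin.last m := insP_self τ₁ p₁
    have h2 : insP τ₂ p₂ p₁ ≠ Fin.last m := by
      rcases Nat.lt_trichotomy (p₁ : ℕ) (p₂ : ℕ) with hc | hc | hc
      · rw [insP_lt' τ₂ p₂ _ p₁.isLt hc (by have := p₂.isLt; omega)]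
        exact ne_of_lt (Fin.castSucc_lt_last _)
      · exact absurd (Fin.ext hc) hne
      · rw [insP_gt' τ₂ p₂ _ p₁.isLt hc (by have := p₁.isLt; omega)]
        exact ne_of_lt (Fin.castSucc_lt_last _)
    rw [h] at h1
    exact h2 (by simpa using h1)
  subst hp
  have hτ : τ₁ = τ₂ := by
    ext a
    have ha := a.isLt
    by_cases hc : (a : ℕ) < (p₁ : ℕ)
    · have e1 := insP_lt' τ₁ p₁ (a : ℕ) (by omega) hc ha
      have e2 := insP_lt' τ₂ p₁ (a : ℕ) (by omega) hc ha
      rw [h] at e1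
      exact congrArg Fin.val (Fin.castSucc_injective m (e1.symm.trans e2))
    · have e1 := insP_gt' τ₁ p₁ ((a : ℕ) + 1) (by omega) (by omega) (by omega)
      have e2 := insP_gt' τ₂ p₁ ((a : ℕ) + 1) (by omega) (by omega) (by omega)
      rw [h] at e1
      have h2 := Fin.castSucc_injective m (e1.symm.trans e2)
      have h3 : (⟨(a : ℕ) + 1 - 1, by omega⟩ : Fin m) = a :=
        Fin.ext (show (a : ℕ) + 1 - 1 = (a : ℕ) by omega)
      rw [h3] at h2
      exact congrArg Fin.val h2
  rw [hτ]

end Rec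

open scoped Classical

lemma eulerian_eq_card (n k : ℕ) (hk : k ≠ 0) :
    eulerian n k
      = (Finset.univ.filter fun σ : Equiv.Perm (Fin n) => descents σ + 1 = k).card := by
  rw [eulerian, if_neg hk, Nat.card_eq_fintype_card, Fintype.card_subtype]

lemma eulerian_zero (n : ℕ) : eulerian n 0 = 0 := by rw [eulerian, if_pos rfl]

lemma card_descents_filter (n j : ℕ) :
    (Finset.univ.filter fun σ : Equiv.Perm (Fin n) => descents σ + 1 = j).card
      = eulerian n j := by
  rcases j with _ | j
  · rw [eulerian_zero, Finset.card_eq_zero]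
    ext σ
    simp only [mem_filter, mem_univ, true_and, Finset.notMem_empty, iff_false]
    omega
  · exact (eulerian_eq_card n (j + 1) (Nat.succ_ne_zero j)).symm

lemma eulerian_of_gt {n k : ℕ} (hn : 1 ≤ n) (hnk : n < k) : eulerian n k = 0 := by
  rw [eulerian_eq_card n k (by omega), Finset.card_eq_zero]
  ext σ
  simp only [mem_filter, mem_univ, true_and, Finset.notMem_empty, iff_false]
  have := descents_le σ
  omega

lemma card_filter_prod {α β : Type*} [Fintype α] [Fintype β] (Q : α × β → Prop)
    [DecidablePred Q] :
    (Finset.univ.filter Q).card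
      = ∑ a : α, (Finset.univ.filter fun b => Q (a, b)).card := by
  rw [Finset.card_eq_sum_card_fiberwise (f := Prod.fst) (t := Finset.univ) (by simp)]
  refine Finset.sum_congr rfl fun a _ => ?_
  refine Finset.card_bij' (fun x _ => x.2) (fun b _ => (a, b)) ?_ ?_ ?_ ?_
  · rintro ⟨a', b⟩ hx
    simp only [mem_filter, mem_univ, true_and] at hx ⊢
    obtain ⟨hq, rfl⟩ := hx
    exact hq
  · intro b hb
    simp only [mem_filter, mem_univ, true_and] at hb ⊢
    exact ⟨hb, trivial⟩
  · rintro ⟨a', b⟩ hx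
    simp only [mem_filter, mem_univ, true_and] at hx
    obtain ⟨-, rfl⟩ := hx
    rfl
  · intro b _
    rfl

lemma eulerian_succ (m j : ℕ) :
    eulerian (m + 1) (j + 1)
      = (j + 1) * eulerian m (j + 1) + (m + 1 - j) * eulerian m j := by
  have hbij : Function.Bijective (fun x : Equiv.Perm (Fin m) × Fin (m + 1) => insP x.1 x.2) := by
    rw [Fintype.bijective_iff_injective_and_card]
    refine ⟨insP_uncurried_inj, ?_⟩
    simp only [Fintype.card_prod, Fintype.card_perm, Fintype.card_fin]
    rw [Nat.factorial_succ, mul_comm]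
  have h1 : (Finset.univ.filter fun σ : Equiv.Perm (Fin (m + 1)) => descents σ + 1 = j + 1).card
      = (Finset.univ.filter
          fun x : Equiv.Perm (Fin m) × Fin (m + 1) => descents (insP x.1 x.2) + 1 = j + 1).card := by
    refine (Finset.card_bij (fun x _ => insP x.1 x.2) ?_ ?_ ?_).symm
    · intro x hx
      simp only [mem_filter, mem_univ, true_and] at hx ⊢
      exact hx
    · intro x _ y _ h
      exact insP_uncurried_inj h
    · intro σ hσ
      simp only [mem_filter, mem_univ, true_and] at hσ
      obtain ⟨x, hx⟩ := hbij.2 σ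
      exact ⟨x, by simp only [mem_filter, mem_univ, true_and, hx]; exact hσ, hx⟩
  rw [eulerian_eq_card _ _ (Nat.succ_ne_zero j), h1, card_filter_prod]
  have h2 : ∀ τ : Equiv.Perm (Fin m),
      (Finset.univ.filter fun p : Fin (m + 1) => descents (insP τ p) + 1 = j + 1).card
        = (j + 1) * (if descents τ + 1 = j + 1 then 1 else 0)
          + (m + 1 - j) * (if descents τ + 1 = j then 1 else 0) := by
    intro τ
    have e : (Finset.univ.filter fun p : Fin (m + 1) => descents (insP τ p) + 1 = j + 1)
        = (Finset.univ.filter fun p : Fin (m + 1) => descents (insP τ p) = j) := by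
      ext p
      simp only [mem_filter, mem_univ, true_and]
      omega
    rw [e, count_insP]
    split_ifs <;> omega
  rw [Finset.sum_congr rfl fun τ _ => h2 τ, Finset.sum_add_distrib, ← Finset.mul_sum,
    ← Finset.mul_sum, Finset.sum_boole, Finset.sum_boole]
  push_cast
  rw [card_descents_filter]
  have e3 : (Finset.univ.filter fun x : Equiv.Perm (Fin m) => descents x = j)
      = (Finset.univ.filter fun x : Equiv.Perm (Fin m) => descents x + 1 = j + 1) := by
    ext x
    simp only [mem_filter, mem_univ, true_and]
    omega
  rw [e3, card_descents_filter]

section PS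

open PowerSeries

noncomputable def F (n : ℕ) : PowerSeries ℚ := PowerSeries.mk fun i => ((i : ℚ) + 1) ^ n

noncomputable def B (n : ℕ) : PowerSeries ℚ :=
  ∑ j ∈ Finset.range n, ((eulerian n (j + 1) : ℚ⟦X⟧)) * (X : ℚ⟦X⟧) ^ j

lemma eulerian_one_one : eulerian 1 1 = 1 := by
  rw [eulerian_eq_card 1 1 one_ne_zero]
  have hd : ∀ σ : Equiv.Perm (Fin 1), descents σ = 0 := by
    intro σ
    rw [descents_eq, Finset.card_eq_zero]
    ext j
    simp only [dset, mem_filter, mem_range, Finset.notMem_empty, iff_false, not_and]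
    rintro hj ⟨h, -⟩
    omega
  have : (Finset.univ.filter fun σ : Equiv.Perm (Fin 1) => descents σ + 1 = 1)
      = Finset.univ := by
    ext σ
    simp [hd σ]
  rw [this, Finset.card_univ]
  simp [Fintype.card_perm]

lemma one_sub_X_mul_F_one : ((1 : ℚ⟦X⟧) - X) * F 1 = PowerSeries.mk fun _ => (1 : ℚ) := by
  have : ((1 : ℚ⟦X⟧) - X) * F 1 = F 1 - X * F 1 := by ring
  rw [this]
  ext k
  rcases k with _ | k
  · simp [F, coeff_zero_X_mul]
  · rw [map_sub, coeff_succ_X_mul]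
    simp only [F, coeff_mk]
    push_cast
    ring

lemma one_sub_X_mul_geom : ((1 : ℚ⟦X⟧) - X) * (PowerSeries.mk fun _ => (1 : ℚ)) = 1 := by
  have : ((1 : ℚ⟦X⟧) - X) * (PowerSeries.mk fun _ => (1 : ℚ))
      = (PowerSeries.mk fun _ => (1 : ℚ)) - X * (PowerSeries.mk fun _ => (1 : ℚ)) := by ring
  rw [this]
  ext k
  rcases k with _ | k
  · simp [coeff_zero_X_mul]
  · rw [map_sub, coeff_succ_X_mul]
    simp [coeff_mk, coeff_one]

lemma base_case : ((1 : ℚ⟦X⟧) - X) ^ (1 + 1) * F 1 = B 1 := by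
  have hB : B 1 = 1 := by
    simp [B, eulerian_one_one]
  rw [hB, pow_two, mul_assoc, one_sub_X_mul_F_one, one_sub_X_mul_geom]

lemma F_succ (n : ℕ) : F (n + 1) = F n + X * (d⁄dX ℚ (F n)) := by
  ext i
  rcases i with _ | i
  · simp [F, coeff_zero_X_mul]
  · rw [map_add, coeff_succ_X_mul, coeff_derivative]
    simp only [F, coeff_mk]
    push_cast
    ring

lemma X_mul_deriv_term (c j : ℕ) :
    X * (d⁄dX ℚ ((c : ℚ⟦X⟧) * X ^ j)) = (j : ℚ⟦X⟧) * (c : ℚ⟦X⟧) * X ^ j := by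
  rcases j with _ | j
  · simp [Derivation.leibniz, Derivation.map_natCast]
  · rw [Derivation.leibniz, Derivation.leibniz_pow, derivative_X, Derivation.map_natCast]
    simp only [smul_eq_mul, nsmul_eq_mul, mul_one, smul_zero, mul_zero, add_zero,
      Nat.add_sub_cancel]
    push_cast
    ring

lemma X_mul_deriv_B (n : ℕ) :
    X * (d⁄dX ℚ (B n))
      = ∑ j ∈ Finset.range n, (j : ℚ⟦X⟧) * (eulerian n (j + 1) : ℚ⟦X⟧) * X ^ j := by
  rw [B, map_sum, Finset.mul_sum]
  exact Finset.sum_congr rfl fun j _ => X_mul_deriv_term _ j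

lemma key_poly (n : ℕ) (hn : 1 ≤ n) :
    ((1 : ℚ⟦X⟧) - X) * B n + X * ((1 : ℚ⟦X⟧) - X) * d⁄dX ℚ (B n)
      + ((n : ℚ⟦X⟧) + 1) * X * B n = B (n + 1) := by
  have hrw : X * ((1 : ℚ⟦X⟧) - X) * d⁄dX ℚ (B n)
      = ((1 : ℚ⟦X⟧) - X) * (X * d⁄dX ℚ (B n)) := by ring
  have hL : ((1 : ℚ⟦X⟧) - X) * B n + X * ((1 : ℚ⟦X⟧) - X) * d⁄dX ℚ (B n)
      + ((n : ℚ⟦X⟧) + 1) * X * B n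
      = ∑ j ∈ Finset.range n, (eulerian n (j + 1) : ℚ⟦X⟧)
          * (((j : ℚ⟦X⟧) + 1) * X ^ j + ((n : ℚ⟦X⟧) - (j : ℚ⟦X⟧)) * X ^ (j + 1)) := by
    rw [hrw, X_mul_deriv_B, B, Finset.mul_sum, Finset.mul_sum, Finset.mul_sum,
      ← Finset.sum_add_distrib, ← Finset.sum_add_distrib]
    refine Finset.sum_congr rfl fun j _ => ?_
    ring
  have hR : B (n + 1)
      = ∑ j ∈ Finset.range n, (eulerian n (j + 1) : ℚ⟦X⟧)
          * (((j : ℚ⟦X⟧) + 1) * X ^ j + ((n : ℚ⟦X⟧) - (j : ℚ⟦X⟧)) * X ^ (j + 1)) := by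
    rw [B]
    have hcast : ∀ j ∈ Finset.range (n + 1),
        (eulerian (n + 1) (j + 1) : ℚ⟦X⟧) * (X : ℚ⟦X⟧) ^ j
          = ((j : ℚ⟦X⟧) + 1) * (eulerian n (j + 1) : ℚ⟦X⟧) * X ^ j
            + (((n : ℚ⟦X⟧) + 1) - (j : ℚ⟦X⟧)) * (eulerian n j : ℚ⟦X⟧) * X ^ j := by
      intro j hj
      rw [Finset.mem_range] at hj
      rw [eulerian_succ]
      push_cast [Nat.cast_sub (show j ≤ n + 1 by omega)]
      ring
    rw [Finset.sum_congr rfl hcast, Finset.sum_add_distrib, Finset.sum_range_succ,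
      Finset.sum_range_succ']
    rw [eulerian_of_gt hn (by omega), eulerian_zero]
    push_cast
    simp only [mul_zero, zero_mul, add_zero, zero_add]
    rw [← Finset.sum_add_distrib]
    refine Finset.sum_congr rfl fun j _ => ?_
    push_cast
    ring
  rw [hL, ← hR]

lemma main_identity (n : ℕ) (hn : 1 ≤ n) :
    ((1 : ℚ⟦X⟧) - X) ^ (n + 1) * F n = B n := by
  induction n, hn using Nat.le_induction with
  | base => exact base_case
  | succ n hn ih =>
    have hd : ((1 : ℚ⟦X⟧) - X) ^ (n + 1) * d⁄dX ℚ (F n)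
        - ((n : ℚ⟦X⟧) + 1) * ((1 : ℚ⟦X⟧) - X) ^ n * F n = d⁄dX ℚ (B n) := by
      have h := congrArg (d⁄dX ℚ) ih
      rw [Derivation.leibniz, Derivation.leibniz_pow, Derivation.map_sub, Derivation.map_one_eq_zero,
        derivative_X] at h
      simp only [smul_eq_mul, nsmul_eq_mul, Nat.add_sub_cancel, zero_sub, mul_neg,
        mul_one, neg_mul] at h
      push_cast at h
      linear_combination h
    rw [F_succ, ← key_poly n hn]
    linear_combination (((1 : ℚ⟦X⟧) - X) + ((n : ℚ⟦X⟧) + 1) * X) * ih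
      + (X * ((1 : ℚ⟦X⟧) - X)) * hd

open PowerSeries

/-- For `n ≥ 1`, `(1−t)^{n+1} · Σ_{i≥0} (i+1)^n t^i = A_{n,1} + A_{n,2} t + ⋯ + A_{n,n} t^{n−1}`,
i.e. `Σ_{i≥0} (i+1)^n t^i = A_n(t)/(t·(1−t)^{n+1})` where `A_n` is the `n`-th Eulerian
polynomial. -/
theorem stmt8 (n : ℕ) (hn : 1 ≤ n) :
    (1 - PowerSeries.X : PowerSeries ℚ) ^ (n + 1)
        * PowerSeries.mk (fun i => ((i + 1) ^ n : ℚ))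
      = ∑ k ∈ Finset.Icc 1 n, PowerSeries.C (R := ℚ) (eulerian n k) * PowerSeries.X ^ (k - 1) := by
  have hmk : PowerSeries.mk (fun i => ((i + 1) ^ n : ℚ)) = F n := by
    ext i
    simp [F]
  have hR : (∑ k ∈ Finset.Icc 1 n,
        PowerSeries.C (R := ℚ) (eulerian n k) * (PowerSeries.X : ℚ⟦X⟧) ^ (k - 1)) = B n := by
    rw [B]
    refine Finset.sum_bij' (fun k _ => k - 1) (fun j _ => j + 1) ?_ ?_ ?_ ?_ ?_
    · intro k hk
      rw [Finset.mem_Icc] at hk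
      simp only [Finset.mem_range]
      omega
    · intro j hj
      rw [Finset.mem_range] at hj
      simp only [Finset.mem_Icc]
      omega
    · intro k hk
      rw [Finset.mem_Icc] at hk
      beta_reduce
      omega
    · intro j _
      beta_reduce
      omega
    · intro k hk
      rw [Finset.mem_Icc] at hk
      beta_reduce
      rw [show k - 1 + 1 = k by omega, map_natCast]
  rw [hmk, main_identity n hn, ← hR]

end PS
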